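/- Let G be an s-t graph whose vertex set is V(Tr) ∪ {t}, where Tr is a tree containing s with at least two vertices, every leaf of Tr is adjacent to t, and t has exactly δ neighbors, all in V(Tr). Then every tracking set for G contains at least δ − 1 vertices, all of which lie in V(Tr). -/

import Mathlib

open SimpleGraph List

lemma walk_support_getLast? {W : Type*} {H : SimpleGraph W} {a b : W} (p : H.Walk a b) :
    p.support.getLast? = some b := by
  rw [List.getLast?_eq_getLast_of_ne_nil (by simp), SimpleGraph.Walk.getLast_support]

lemma filter_takeUntil_eq {W : Type*} [DecidableEq W] {H : SimpleGraph W} {a b w : W}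
    (P : H.Walk a b) (hP : P.IsPath) (p : W → Bool) (hw : w ∈ P.support)
    (hlast : (P.support.filter p).getLast? = some w) :
    P.support.filter p = ((P.takeUntil w hw).support.filter p) := by
  have hsplit : P.support
      = (P.takeUntil w hw).support ++ (P.dropUntil w hw).support.tail := by
    conv_lhs => rw [← SimpleGraph.Walk.take_spec P hw]
    rw [SimpleGraph.Walk.support_append]
  have hnodup : P.support.Nodup := hP.support_nodup
  rw [hsplit] at hnodup hlast ⊢
  rw [List.filter_append] at hlast ⊢
  rcases eq_or_ne (((P.dropUntil w hw).support.tail).filter p) [] with hnil | hnil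
  · simp [hnil]
  · exfalso
    rw [List.getLast?_append_of_ne_nil _ hnil] at hlast
    have hwf : w ∈ ((P.dropUntil w hw).support.tail).filter p := by
      have h3 := List.dropLast_append_getLast?
        (l := ((P.dropUntil w hw).support.tail).filter p) w (by rw [hlast]; rfl)
      rw [← h3]; simp
    have hw2 : w ∈ (P.dropUntil w hw).support.tail := List.mem_of_mem_filter hwf
    have hw1 : w ∈ (P.takeUntil w hw).support := SimpleGraph.Walk.end_mem_support _
    exact (List.disjoint_of_nodup_append hnodup) hw1 hw2



/-- A tracking set for an s-t graph: any two distinct s-t paths yield different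
sequences of vertices of `T`. -/
def IsTrackingSet {V : Type*} [DecidableEq V] (G : SimpleGraph V) (s t : V)
    (T : Finset V) : Prop :=
  ∀ p q : G.Path s t,
    p.1.support.filter (· ∈ T) = q.1.support.filter (· ∈ T) → p = q

/-- a tree-sink structure with the destination `t` as sink. The
vertex set of `G` is `A ∪ {t}`, `G` induces a tree on `A` containing `s`, all
leaves of that tree are adjacent to `t`, and `t` has exactly `δ` neighbors,
all in `A`. Then every tracking set contains at least `δ - 1` vertices of
`A`. -/
theorem tree_sink_at_t_lower_bound {V : Type*} [Fintype V] [DecidableEq V]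
    (G : SimpleGraph V) [DecidableRel G.Adj] (s t : V) (A : Finset V) (δ : ℕ)
    (hsA : s ∈ A) (htA : t ∉ A) (hV : ∀ v : V, v ∈ A ∨ v = t)
    (hA2 : 2 ≤ A.card)
    (htree : (G.induce (A : Set V)).IsTree)
    (hleaf : ∀ v ∈ A, (A.filter (fun u => G.Adj v u)).card = 1 → G.Adj v t)
    (hδ : G.degree t = δ) (hNt : G.neighborFinset t ⊆ A)
    (T : Finset V) (hT : IsTrackingSet G s t T) :
    δ - 1 ≤ (T ∩ A).card := by
  classical
  set S : Set V := (A : Set V) with hS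
  have hsS : s ∈ S := hsA
  let s' : S := ⟨s, hsS⟩
  have huniq := htree.existsUnique_path
  let Wk : ∀ u : S, (G.induce S).Walk s' u := fun u => (huniq s' u).choose
  have hWpath : ∀ u, (Wk u).IsPath := fun u => (huniq s' u).choose_spec.1
  have hWuniq : ∀ (u : S) (q : (G.induce S).Walk s' u), q.IsPath → q = Wk u :=
    fun u q hq => (huniq s' u).choose_spec.2 q hq
  let pT : S → Bool := fun x => decide (x.1 ∈ T)
  let g : S → List S := fun u => (Wk u).support.filter pT
  -- Claim A: the filtered sequence is determined by its last element
  have keyA : ∀ u u' : S, (g u).getLast? = (g u').getLast? → g u = g u' := by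
    intro u u' h
    cases hc : (g u).getLast? with
    | none =>
      rw [hc] at h
      rw [List.getLast?_eq_none_iff] at hc
      rw [eq_comm, List.getLast?_eq_none_iff] at h
      show g u = g u'
      rw [hc, h]
    | some w =>
      rw [hc] at h
      have key : ∀ v : S, (g v).getLast? = some w → g v = (Wk w).support.filter pT := by
        intro v hv
        have hwmem : w ∈ (Wk v).support := by
          have hmm : w ∈ g v := by
            have h3 := List.dropLast_append_getLast? (l := g v) w (by rw [hv]; rfl)
            rw [← h3]; simp
          exact List.mem_of_mem_filter hmm
        have h1 := filter_takeUntil_eq (Wk v) (hWpath v) pT hwmem hv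
        show (Wk v).support.filter pT = _
        rw [h1, hWuniq w ((Wk v).takeUntil w hwmem) ((hWpath v).takeUntil hwmem)]
      rw [key u hc, key u' h.symm]
  let emb : G.induce S ↪g G := SimpleGraph.Embedding.induce S
  -- big path construction
  have hbig : ∀ (u : S) (ha : G.Adj u.1 t),
      (((Wk u).map emb.toHom).concat ha).IsPath := by
    intro u ha
    have hmap : ((Wk u).map emb.toHom).IsPath :=
      SimpleGraph.Walk.map_isPath_of_injective Subtype.val_injective (hWpath u)
    rw [SimpleGraph.Walk.isPath_def, SimpleGraph.Walk.support_concat ((Wk u).map emb.toHom) ha,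
      List.nodup_append]
    refine ⟨hmap.support_nodup, List.nodup_singleton t, ?_⟩
    intro x hx b hb hx'
    rw [SimpleGraph.Walk.support_map] at hx
    rcases List.mem_map.mp hx with ⟨y, _, rfl⟩
    rw [List.mem_singleton] at hb; rw [hb] at hx'
    exact htA (by rw [← hx'] at htA ⊢; exact y.2)
  -- support filter of the big path
  have hsupp : ∀ (u : S) (ha : G.Adj u.1 t),
      ((((Wk u).map emb.toHom).concat ha).support.filter (· ∈ T))
        = (g u).map Subtype.val ++ ([t].filter (· ∈ T)) := by
    intro u ha
    rw [SimpleGraph.Walk.support_concat ((Wk u).map emb.toHom) ha, List.filter_append,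
      SimpleGraph.Walk.support_map, List.filter_map]
    rfl
  -- the injection
  let F : V → Option V := fun u =>
    if h : u ∈ A then ((g ⟨u, h⟩).getLast?).map Subtype.val else none
  have hmaps : ∀ u ∈ G.neighborFinset t, F u ∈ insert none ((T ∩ A).image some) := by
    intro u hu
    have hA : u ∈ A := hNt hu
    show (if h : u ∈ A then ((g ⟨u, h⟩).getLast?).map Subtype.val else none) ∈ _
    rw [dif_pos hA]
    cases hgl : (g ⟨u, hA⟩).getLast? with
    | none => simp
    | some x =>
      have hx : x ∈ g ⟨u, hA⟩ := by
        have h3 := List.dropLast_append_getLast? (l := g ⟨u, hA⟩) x (by rw [hgl]; rfl)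
        rw [← h3]; simp
      have hxT : x.1 ∈ T := by
        have := List.of_mem_filter hx
        simpa [pT] using this
      rw [Option.map_some]
      exact Finset.mem_insert_of_mem
        (Finset.mem_image_of_mem some (Finset.mem_inter.mpr ⟨hxT, x.2⟩))
  have hinj : Set.InjOn F (G.neighborFinset t : Set V) := by
    intro u hu u' hu' hF
    have hu : u ∈ G.neighborFinset t := hu
    have hu' : u' ∈ G.neighborFinset t := hu'
    have hA : u ∈ A := hNt hu
    have hA' : u' ∈ A := hNt hu'
    have hgl : (g ⟨u, hA⟩).getLast? = (g ⟨u', hA'⟩).getLast? := by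
      apply Option.map_injective (Subtype.val_injective (p := (· ∈ S)))
      have hF1 : (if h : u ∈ A then ((g ⟨u, h⟩).getLast?).map Subtype.val else none)
          = (if h : u' ∈ A then ((g ⟨u', h⟩).getLast?).map Subtype.val else none) := hF
      rwa [dif_pos hA, dif_pos hA'] at hF1
    have hgg := keyA _ _ hgl
    have ha : G.Adj u t := ((SimpleGraph.mem_neighborFinset G t u).mp hu).symm
    have ha' : G.Adj u' t := ((SimpleGraph.mem_neighborFinset G t u').mp hu').symm
    let P1 : G.Path s t := ⟨((Wk ⟨u, hA⟩).map emb.toHom).concat ha, hbig _ ha⟩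
    let P2 : G.Path s t := ⟨((Wk ⟨u', hA'⟩).map emb.toHom).concat ha', hbig _ ha'⟩
    have hPeq : P1 = P2 := by
      apply hT
      show ((((Wk ⟨u, hA⟩).map emb.toHom).concat ha).support.filter (· ∈ T))
        = ((((Wk ⟨u', hA'⟩).map emb.toHom).concat ha').support.filter (· ∈ T))
      rw [hsupp ⟨u, hA⟩ ha, hsupp ⟨u', hA'⟩ ha', hgg]
    have hw : ((Wk ⟨u, hA⟩).map emb.toHom).concat ha
        = ((Wk ⟨u', hA'⟩).map emb.toHom).concat ha' := congrArg Subtype.val hPeq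
    have hsup := congrArg SimpleGraph.Walk.support hw
    rw [SimpleGraph.Walk.support_concat ((Wk ⟨u, hA⟩).map emb.toHom) ha,
      SimpleGraph.Walk.support_concat ((Wk ⟨u', hA'⟩).map emb.toHom) ha'] at hsup
    have hs2 := List.append_cancel_right hsup
    have h1 := walk_support_getLast? ((Wk ⟨u, hA⟩).map emb.toHom)
    have h2 := walk_support_getLast? ((Wk ⟨u', hA'⟩).map emb.toHom)
    rw [hs2, h2] at h1
    exact Option.some_injective _ h1.symm
  have hcard := Finset.card_le_card_of_injOn F hmaps hinj
  have h2 : (insert none ((T ∩ A).image some)).card ≤ (T ∩ A).card + 1 := by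
    refine le_trans (Finset.card_insert_le _ _) ?_
    simp [Finset.card_image_of_injective _ (Option.some_injective V)]
  have h3 : δ = (G.neighborFinset t).card := by rw [← hδ]; rfl
  omega
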